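/- arXiv:2104.09913 — 4 statements merged into one kernel-verified Lean document; each statement's English description precedes it below -/
import Mathlib

section
/- Let ℏ > 0, R > 0 and A ∈ (0, π/2). Define F : ℝ → ℝ by F(x) = (ℏ²/R²)·[ (1/2)·cot²(A)·x² − ℏ·csc⁴(A)·sin(2A)·x + ℏ³·csc⁶(A)·sin(2A)/(2(x + ℏ cot A)) + ℏ²·(2 + cos(2A))·csc⁴(A)·ln(ℏ cos A + x sin A) ]. Then for every x > 0, F is differentiable at x with F′(x) = (ℏ²/R²) · x · cot²(A + arctan(ℏ/x)). -/
open Real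

theorem antiderivative_I1_plus (h R A : ℝ) (hh : 0 < h) (hR : 0 < R)
    (hA : A ∈ Set.Ioo 0 (π / 2)) :
    ∀ x : ℝ, 0 < x →
      HasDerivAt
        (fun x : ℝ => (h ^ 2 / R ^ 2) *
          ((1 / 2) * (Real.cot A) ^ 2 * x ^ 2
            - h * (1 / Real.sin A) ^ 4 * Real.sin (2 * A) * x
            + h ^ 3 * (1 / Real.sin A) ^ 6 * Real.sin (2 * A) / (2 * (x + h * Real.cot A))
            + h ^ 2 * (2 + Real.cos (2 * A)) * (1 / Real.sin A) ^ 4 *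
                Real.log (h * Real.cos A + x * Real.sin A)))
        ((h ^ 2 / R ^ 2) * x * (Real.cot (A + Real.arctan (h / x))) ^ 2) x := by
  obtain ⟨hA0, hA2⟩ := hA
  have hs : 0 < Real.sin A := Real.sin_pos_of_pos_of_lt_pi hA0 (by linarith [Real.pi_pos])
  have hc : 0 < Real.cos A := Real.cos_pos_of_mem_Ioo ⟨by linarith [Real.pi_pos], hA2⟩
  intro x hx
  have hcot : Real.cot A = Real.cos A / Real.sin A := Real.cot_eq_cos_div_sin A
  have hcotpos : 0 < Real.cot A := by rw [hcot]; positivity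
  have hd1 : 0 < x + h * Real.cot A := by positivity
  have hd2 : 0 < h * Real.cos A + x * Real.sin A := by positivity
  -- derivatives of the pieces
  have H1 : HasDerivAt (fun x : ℝ => (1 / 2) * (Real.cot A) ^ 2 * x ^ 2)
      ((1 / 2) * (Real.cot A) ^ 2 * (2 * x ^ 1)) x :=
    (hasDerivAt_pow 2 x).const_mul _
  have H2 : HasDerivAt (fun x : ℝ => h * (1 / Real.sin A) ^ 4 * Real.sin (2 * A) * x)
      (h * (1 / Real.sin A) ^ 4 * Real.sin (2 * A) * 1) x :=
    (hasDerivAt_id x).const_mul _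
  have Hu : HasDerivAt (fun x : ℝ => x + h * Real.cot A) 1 x := (hasDerivAt_id x).add_const _
  have H3 : HasDerivAt
      (fun x : ℝ => h ^ 3 * (1 / Real.sin A) ^ 6 * Real.sin (2 * A) / (2 * (x + h * Real.cot A)))
      ((0 * (2 * (x + h * Real.cot A)) - h ^ 3 * (1 / Real.sin A) ^ 6 * Real.sin (2 * A) * (2 * 1))
        / (2 * (x + h * Real.cot A)) ^ 2) x :=
    (hasDerivAt_const x _).div (Hu.const_mul 2) (by positivity)
  have Hv : HasDerivAt (fun x : ℝ => h * Real.cos A + x * Real.sin A) (1 * Real.sin A) x :=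
    ((hasDerivAt_id x).mul_const _).const_add _
  have H4 : HasDerivAt
      (fun x : ℝ => h ^ 2 * (2 + Real.cos (2 * A)) * (1 / Real.sin A) ^ 4 *
        Real.log (h * Real.cos A + x * Real.sin A))
      (h ^ 2 * (2 + Real.cos (2 * A)) * (1 / Real.sin A) ^ 4 *
        (1 * Real.sin A / (h * Real.cos A + x * Real.sin A))) x :=
    (Hv.log hd2.ne').const_mul _
  have HF := (((H1.sub H2).add H3).add H4).const_mul (h ^ 2 / R ^ 2)
  convert HF using 1
  · rfl
  · rfl
  · rfl
  -- cot addition formula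
  set t := Real.arctan (h / x) with ht
  have hxq : (0:ℝ) < 1 + (h / x) ^ 2 := by positivity
  have hsq : 0 < Real.sqrt (1 + (h / x) ^ 2) := Real.sqrt_pos.mpr hxq
  have key : Real.cot (A + t) = (x * Real.cos A - h * Real.sin A) / (x * Real.sin A + h * Real.cos A) := by
    rw [Real.cot_eq_cos_div_sin, Real.cos_add, Real.sin_add, Real.cos_arctan, Real.sin_arctan]
    rw [div_eq_div_iff]
    · field_simp
    · have hpos : 0 < Real.sin A * (1 / Real.sqrt (1 + (h / x) ^ 2)) +
          Real.cos A * (h / x / Real.sqrt (1 + (h / x) ^ 2)) := by positivity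
      exact hpos.ne'
    · positivity
  rw [key]
  rw [hcot, Real.sin_two_mul, Real.cos_two_mul]
  have hpy := Real.sin_sq_add_cos_sq A
  have hu : x * Real.sin A + h * Real.cos A ≠ 0 := by positivity
  have hd1' : x + h * (Real.cos A / Real.sin A) ≠ 0 := by rw [hcot] at hd1; positivity
  have hd2' : h * Real.cos A + x * Real.sin A ≠ 0 := hd2.ne'
  field_simp
  linear_combination (2 * x * Real.sin A * Real.cos A * h ^ 3 + -2 * x * Real.sin A * Real.cos A ^ 3 * h ^ 3 + 2 * x * Real.sin A ^ 3 * Real.cos A * h ^ 3 + 2 * x ^ 2 * Real.sin A ^ 2 * h ^ 2 + -6 * x ^ 2 * Real.sin A ^ 2 * Real.cos A ^ 2 * h ^ 2 + 2 * x ^ 2 * Real.sin A ^ 4 * h ^ 2 + -4 * x ^ 3 * Real.sin A ^ 3 * Real.cos A * h) * hpy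
end

section
/- Let ℏ > 0, R > 0 and A ∈ (0, π/2). Define F on the interval (0, ℏ cot A) by F(x) = (ℏ²/R²)·[ (1/2)·cot²(A)·x² + ℏ·csc⁴(A)·sin(2A)·x − ℏ³·csc⁶(A)·sin(2A)/(2(x − ℏ cot A)) + ℏ²·(2 + cos(2A))·csc⁴(A)·ln(ℏ cos A − x sin A) ]. Then for every x ∈ (0, ℏ cot A), F is differentiable at x with F′(x) = (ℏ²/R²) · x · cot²(A − arctan(ℏ/x)). -/
open Real

theorem antiderivative_I1_minus (h R A : ℝ) (hh : 0 < h) (hR : 0 < R)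
    (hA : A ∈ Set.Ioo 0 (π / 2)) :
    ∀ x ∈ Set.Ioo (0 : ℝ) (h * Real.cot A),
      HasDerivAt
        (fun x : ℝ => (h ^ 2 / R ^ 2) *
          ((1 / 2) * (Real.cot A) ^ 2 * x ^ 2
            + h * (1 / Real.sin A) ^ 4 * Real.sin (2 * A) * x
            - h ^ 3 * (1 / Real.sin A) ^ 6 * Real.sin (2 * A) / (2 * (x - h * Real.cot A))
            + h ^ 2 * (2 + Real.cos (2 * A)) * (1 / Real.sin A) ^ 4 *
                Real.log (h * Real.cos A - x * Real.sin A)))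
        ((h ^ 2 / R ^ 2) * x * (Real.cot (A - Real.arctan (h / x))) ^ 2) x := by
  obtain ⟨hA0, hA2⟩ := hA
  intro x hx
  obtain ⟨hx0, hx1⟩ := hx
  have hs : 0 < Real.sin A :=
    Real.sin_pos_of_pos_of_lt_pi hA0 (hA2.trans (by linarith [Real.pi_pos]))
  have hc : 0 < Real.cos A := Real.cos_pos_of_mem_Ioo ⟨by linarith, hA2⟩
  have hcot : Real.cot A = Real.cos A / Real.sin A := Real.cot_eq_cos_div_sin A
  have hD : x * Real.sin A - h * Real.cos A < 0 := by
    have h1 : x < h * (Real.cos A / Real.sin A) := by rw [← hcot]; exact hx1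
    have h2 : x * Real.sin A < h * (Real.cos A / Real.sin A) * Real.sin A := by
      nlinarith
    have h3 : h * (Real.cos A / Real.sin A) * Real.sin A = h * Real.cos A := by
      field_simp
    linarith
  have hDne : x * Real.sin A - h * Real.cos A ≠ 0 := ne_of_lt hD
  have hxa : x - h * Real.cot A ≠ 0 := by
    have : x < h * Real.cot A := hx1
    linarith
  have h2xa : (2 : ℝ) * (x - h * Real.cot A) ≠ 0 := mul_ne_zero two_ne_zero hxa
  have hlogpos : 0 < h * Real.cos A - x * Real.sin A := by linarith
  have hlogne : h * Real.cos A - x * Real.sin A ≠ 0 := ne_of_gt hlogpos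
  -- cot(A - arctan(h/x)) = (x cos A + h sin A) / (x sin A - h cos A)
  have hsq : (0:ℝ) < Real.sqrt (1 + (h / x) ^ 2) := by
    apply Real.sqrt_pos.2; positivity
  have harct : Real.cot (A - Real.arctan (h / x)) =
      (x * Real.cos A + h * Real.sin A) / (x * Real.sin A - h * Real.cos A) := by
    rw [Real.cot_eq_cos_div_sin, Real.cos_sub, Real.sin_sub, Real.cos_arctan, Real.sin_arctan]
    have hden : Real.sin A * (1 / Real.sqrt (1 + (h / x) ^ 2))
        - Real.cos A * (h / x / Real.sqrt (1 + (h / x) ^ 2))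
        = (x * Real.sin A - h * Real.cos A) / (x * Real.sqrt (1 + (h / x) ^ 2)) := by
      field_simp
    have hnum : Real.cos A * (1 / Real.sqrt (1 + (h / x) ^ 2))
        + Real.sin A * (h / x / Real.sqrt (1 + (h / x) ^ 2))
        = (x * Real.cos A + h * Real.sin A) / (x * Real.sqrt (1 + (h / x) ^ 2)) := by
      field_simp
    have hxsq : x * Real.sqrt (1 + (h / x) ^ 2) ≠ 0 := by positivity
    rw [hnum, hden, div_div_div_cancel_right₀ hxsq]
  -- derivative pieces
  have d1 : HasDerivAt (fun x : ℝ => (1 / 2) * (Real.cot A) ^ 2 * x ^ 2)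
      ((Real.cot A) ^ 2 * x) x := by
    have := (hasDerivAt_pow 2 x).const_mul ((1 / 2) * (Real.cot A) ^ 2)
    refine this.congr_deriv (Eq.symm ?_)
    simp
    ring
  have d2 : HasDerivAt (fun x : ℝ => h * (1 / Real.sin A) ^ 4 * Real.sin (2 * A) * x)
      (h * (1 / Real.sin A) ^ 4 * Real.sin (2 * A)) x := by
    have := (hasDerivAt_id x).const_mul (h * (1 / Real.sin A) ^ 4 * Real.sin (2 * A))
    simp only [mul_one, id] at this
    exact this
  have dden : HasDerivAt (fun x : ℝ => 2 * (x - h * Real.cot A)) 2 x := by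
    simpa using ((hasDerivAt_id x).sub_const (h * Real.cot A)).const_mul (2:ℝ)
  have d3 : HasDerivAt
      (fun x : ℝ => h ^ 3 * (1 / Real.sin A) ^ 6 * Real.sin (2 * A) / (2 * (x - h * Real.cot A)))
      ((0 * (2 * (x - h * Real.cot A)) - h ^ 3 * (1 / Real.sin A) ^ 6 * Real.sin (2 * A) * 2)
        / (2 * (x - h * Real.cot A)) ^ 2) x :=
    (hasDerivAt_const x (h ^ 3 * (1 / Real.sin A) ^ 6 * Real.sin (2 * A))).div dden h2xa
  have dlogin : HasDerivAt (fun x : ℝ => h * Real.cos A - x * Real.sin A) (-Real.sin A) x := by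
    simpa using ((hasDerivAt_id x).mul_const (Real.sin A)).const_sub (h * Real.cos A)
  have d4 : HasDerivAt
      (fun x : ℝ => h ^ 2 * (2 + Real.cos (2 * A)) * (1 / Real.sin A) ^ 4 *
        Real.log (h * Real.cos A - x * Real.sin A))
      (h ^ 2 * (2 + Real.cos (2 * A)) * (1 / Real.sin A) ^ 4 *
        (-Real.sin A / (h * Real.cos A - x * Real.sin A))) x :=
    (dlogin.log hlogne).const_mul _
  have dall := (((d1.add d2).sub d3).add d4).const_mul (h ^ 2 / R ^ 2)
  refine dall.congr_deriv (Eq.symm ?_)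
  rw [harct, hcot, Real.sin_two_mul, Real.cos_two_mul]
  have hsne : Real.sin A ≠ 0 := ne_of_gt hs
  have hxa' : x - h * (Real.cos A / Real.sin A) ≠ 0 := by rwa [← hcot]
  field_simp
  linear_combination ((-2 * x * h ^ 3 * Real.sin A * Real.cos A ^ 3) + (6 * x ^ 2 * h ^ 2 * Real.sin A ^ 2 * Real.cos A ^ 2) + (-4 * x ^ 3 * h * Real.sin A ^ 3 * Real.cos A) + (2 * x * h ^ 3 * Real.sin A * Real.cos A) + (2 * x * h ^ 3 * Real.sin A ^ 3 * Real.cos A) + (-2 * x ^ 2 * h ^ 2 * Real.sin A ^ 4) + (-2 * x ^ 2 * h ^ 2 * Real.sin A ^ 2)) * Real.sin_sq_add_cos_sq A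
end

section
/- Let ℏ > 0, R > 0, A ∈ (0, π/2), and set ψ̄ = arctan(ℏ/R). For every ψ satisfying ψ̄ + A ≤ ψ and ψ + A ≤ π/2, one has 0 ≤ (ℏ²/R²)·(cot²(ψ − A) − cot²(ψ + A)) ≤ 1. -/
open Real

lemma cot_anti_aux {x y : ℝ} (hx : 0 < Real.sin x) (hy : 0 < Real.sin y)
    (hxy : x ≤ y) (hd : y - x ≤ π) : Real.cot y ≤ Real.cot x := by
  rw [Real.cot_eq_cos_div_sin, Real.cot_eq_cos_div_sin, div_le_div_iff₀ hy hx]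
  have hs : 0 ≤ Real.sin (y - x) :=
    Real.sin_nonneg_of_nonneg_of_le_pi (by linarith) hd
  rw [Real.sin_sub] at hs
  nlinarith

theorem open_office_vertical_hitting_prob_le_one (h R A : ℝ) (hh : 0 < h) (hR : 0 < R)
    (hA : A ∈ Set.Ioo 0 (π / 2)) (ψ : ℝ)
    (hψl : Real.arctan (h / R) + A ≤ ψ) (hψu : ψ + A ≤ π / 2) :
    0 ≤ (h ^ 2 / R ^ 2) * ((Real.cot (ψ - A)) ^ 2 - (Real.cot (ψ + A)) ^ 2) ∧
      (h ^ 2 / R ^ 2) * ((Real.cot (ψ - A)) ^ 2 - (Real.cot (ψ + A)) ^ 2) ≤ 1 := by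
  obtain ⟨hA0, hA2⟩ := hA
  set t := h / R with ht
  have htpos : 0 < t := div_pos hh hR
  set a0 := Real.arctan t with ha0
  have ha0pos : 0 < a0 := by
    have := Real.arctan_strictMono htpos
    rw [Real.arctan_zero] at this
    exact this
  have ha0lt : a0 < π / 2 := Real.arctan_lt_pi_div_two t
  have hpi : 0 < π := Real.pi_pos
  have ha : a0 ≤ ψ - A := by linarith
  have hb : ψ + A ≤ π / 2 := hψu
  have hab : ψ - A < ψ + A := by linarith
  have hsa : 0 < Real.sin (ψ - A) :=
    Real.sin_pos_of_pos_of_lt_pi (by linarith) (by linarith)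
  have hsb : 0 < Real.sin (ψ + A) :=
    Real.sin_pos_of_pos_of_lt_pi (by linarith) (by linarith)
  have hsa0 : 0 < Real.sin a0 :=
    Real.sin_pos_of_pos_of_lt_pi ha0pos (by linarith)
  -- cot (ψ+A) ≥ 0
  have hcotb : 0 ≤ Real.cot (ψ + A) := by
    rw [Real.cot_eq_cos_div_sin]
    exact div_nonneg (Real.cos_nonneg_of_mem_Icc ⟨by linarith, hb⟩) hsb.le
  -- cot antitone chain
  have h1 : Real.cot (ψ + A) ≤ Real.cot (ψ - A) :=
    cot_anti_aux hsa hsb hab.le (by linarith)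
  have h2 : Real.cot (ψ - A) ≤ Real.cot a0 :=
    cot_anti_aux hsa0 hsa ha (by linarith)
  -- cot a0 = R / h
  have hcos0 : Real.cos a0 ≠ 0 := by
    have : 0 < Real.cos a0 := Real.cos_pos_of_mem_Ioo ⟨by linarith, ha0lt⟩
    linarith
  have htan : Real.tan a0 = t := Real.tan_arctan t
  have hcot0 : Real.cot a0 = R / h := by
    rw [Real.cot_eq_cos_div_sin]
    have hsin_eq : Real.sin a0 = t * Real.cos a0 := by
      have := Real.tan_eq_sin_div_cos a0
      rw [htan] at this
      field_simp at this
      linarith [this]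
    rw [hsin_eq, ht]
    field_simp
  rw [hcot0] at h2
  have hcota : 0 ≤ Real.cot (ψ - A) := le_trans hcotb h1
  have hsq1 : Real.cot (ψ + A) ^ 2 ≤ Real.cot (ψ - A) ^ 2 := by nlinarith
  have hsq2 : Real.cot (ψ - A) ^ 2 ≤ (R / h) ^ 2 := by nlinarith
  constructor
  · apply mul_nonneg (by positivity)
    linarith
  · have hRh : (h ^ 2 / R ^ 2) * ((R / h) ^ 2) = 1 := by
      field_simp
    calc (h ^ 2 / R ^ 2) * ((Real.cot (ψ - A)) ^ 2 - (Real.cot (ψ + A)) ^ 2)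
        ≤ (h ^ 2 / R ^ 2) * ((R / h) ^ 2) := by
          apply mul_le_mul_of_nonneg_left _ (by positivity)
          nlinarith [sq_nonneg (Real.cot (ψ + A))]
      _ = 1 := hRh
end

section
/- Let ℏ > 0 and A ∈ (0, π/2). On the interval (0, ℏ cot A), the function x ↦ cot²(arctan(ℏ/x) − A) − cot²(arctan(ℏ/x) + A) is positive and strictly increasing. -/
open Real

theorem vertical_hitting_prob_strictMono (h A : ℝ) (hh : 0 < h)
    (hA : A ∈ Set.Ioo 0 (π / 2)) :
    (∀ x ∈ Set.Ioo (0 : ℝ) (h * Real.cot A),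
        0 < (Real.cot (Real.arctan (h / x) - A)) ^ 2 -
            (Real.cot (Real.arctan (h / x) + A)) ^ 2) ∧
      StrictMonoOn
        (fun x : ℝ => (Real.cot (Real.arctan (h / x) - A)) ^ 2 -
          (Real.cot (Real.arctan (h / x) + A)) ^ 2)
        (Set.Ioo (0 : ℝ) (h * Real.cot A)) := by
  obtain ⟨hA0, hA2⟩ := hA
  set s := Real.sin A with hs_def
  set c := Real.cos A with hc_def
  have hs : 0 < s := Real.sin_pos_of_pos_of_lt_pi hA0 (by linarith [Real.pi_pos])
  have hc : 0 < c := Real.cos_pos_of_mem_Ioo ⟨by linarith [Real.pi_pos], hA2⟩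
  have hcot : Real.cot A = c / s := Real.cot_eq_cos_div_sin A
  have hbound : ∀ x ∈ Set.Ioo (0 : ℝ) (h * Real.cot A), x * s < h * c := by
    intro x hx
    have hxu := hx.2
    rw [hcot] at hxu
    have := mul_lt_mul_of_pos_right hxu hs
    rwa [mul_assoc, div_mul_cancel₀ _ hs.ne'] at this
  -- key identity
  have key : ∀ x ∈ Set.Ioo (0 : ℝ) (h * Real.cot A),
      (Real.cot (Real.arctan (h / x) - A)) ^ 2 -
        (Real.cot (Real.arctan (h / x) + A)) ^ 2 =
      4 * c * s * h * (x * (x ^ 2 + h ^ 2)) / (h ^ 2 * c ^ 2 - s ^ 2 * x ^ 2) ^ 2 := by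
    intro x hx
    have hx0 := hx.1
    have hxs : x * s < h * c := hbound x hx
    set r := Real.sqrt (1 + (h / x) ^ 2) with hr_def
    have hr : (0 : ℝ) < r := Real.sqrt_pos.mpr (by positivity)
    have hdm : (0 : ℝ) < h * c - s * x := by nlinarith
    have hdp : (0 : ℝ) < h * c + s * x := by positivity
    have hsinm : Real.sin (Real.arctan (h / x) - A) = (h * c - s * x) / (x * r) := by
      rw [Real.sin_sub, Real.sin_arctan, Real.cos_arctan, ← hr_def]
      field_simp
      ring
    have hcosm : Real.cos (Real.arctan (h / x) - A) = (c * x + h * s) / (x * r) := by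
      rw [Real.cos_sub, Real.sin_arctan, Real.cos_arctan, ← hr_def]
      field_simp
      ring
    have hsinp : Real.sin (Real.arctan (h / x) + A) = (h * c + s * x) / (x * r) := by
      rw [Real.sin_add, Real.sin_arctan, Real.cos_arctan, ← hr_def]
      field_simp
      ring
    have hcosp : Real.cos (Real.arctan (h / x) + A) = (c * x - h * s) / (x * r) := by
      rw [Real.cos_add, Real.sin_arctan, Real.cos_arctan, ← hr_def]
      field_simp
      ring
    have hxr : x * r ≠ 0 := by positivity
    have hcm : Real.cot (Real.arctan (h / x) - A) = (c * x + h * s) / (h * c - s * x) := by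
      rw [Real.cot_eq_cos_div_sin, hcosm, hsinm]
      rw [div_div_div_cancel_right₀ hxr]
    have hcp : Real.cot (Real.arctan (h / x) + A) = (c * x - h * s) / (h * c + s * x) := by
      rw [Real.cot_eq_cos_div_sin, hcosp, hsinp]
      rw [div_div_div_cancel_right₀ hxr]
    rw [hcm, hcp]
    have hcs : c ^ 2 + s ^ 2 = 1 := by
      rw [hc_def, hs_def]; exact Real.cos_sq_add_sin_sq A
    have hgen : ((c * x + h * s) / (h * c - s * x)) ^ 2 -
        ((c * x - h * s) / (h * c + s * x)) ^ 2 =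
        4 * c * s * h * (x * (x ^ 2 + h ^ 2)) * (c ^ 2 + s ^ 2) /
          (h ^ 2 * c ^ 2 - s ^ 2 * x ^ 2) ^ 2 := by
      have hD : h ^ 2 * c ^ 2 - s ^ 2 * x ^ 2 ≠ 0 := by nlinarith
      have hdm' := hdm.ne'; have hdp' := hdp.ne'
      rw [div_pow, div_pow, div_sub_div _ _ (pow_ne_zero 2 hdm') (pow_ne_zero 2 hdp'),
        div_eq_div_iff (mul_ne_zero (pow_ne_zero 2 hdm') (pow_ne_zero 2 hdp')) (pow_ne_zero 2 hD)]
      ring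
    rw [hgen, hcs, mul_one]
  have hD_pos : ∀ x ∈ Set.Ioo (0 : ℝ) (h * Real.cot A),
      0 < h ^ 2 * c ^ 2 - s ^ 2 * x ^ 2 := by
    intro x hx
    have hxs := hbound x hx
    have hx0 := hx.1
    nlinarith [mul_pos hx0 hs]
  constructor
  · intro x hx
    rw [key x hx]
    have hD := hD_pos x hx
    have hx0 := hx.1
    positivity
  · intro a ha b hb hab
    simp only
    rw [key a ha, key b hb]
    have hDa := hD_pos a ha
    have hDb := hD_pos b hb
    have ha0 := ha.1
    have hb0 := hb.1
    have hN : a * (a ^ 2 + h ^ 2) < b * (b ^ 2 + h ^ 2) := by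
      apply mul_lt_mul hab (by nlinarith) (by positivity) hb0.le
    have hDb_lt : h ^ 2 * c ^ 2 - s ^ 2 * b ^ 2 < h ^ 2 * c ^ 2 - s ^ 2 * a ^ 2 := by
      have h2 : a ^ 2 < b ^ 2 := by nlinarith
      have := mul_lt_mul_of_pos_left h2 (pow_pos hs 2)
      linarith
    rw [div_lt_div_iff₀ (by positivity) (by positivity)]
    have hK : (0:ℝ) < 4 * c * s * h := by positivity
    have h1 : a * (a ^ 2 + h ^ 2) * (h ^ 2 * c ^ 2 - s ^ 2 * b ^ 2) ^ 2 <
        b * (b ^ 2 + h ^ 2) * (h ^ 2 * c ^ 2 - s ^ 2 * a ^ 2) ^ 2 := by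
      calc a * (a ^ 2 + h ^ 2) * (h ^ 2 * c ^ 2 - s ^ 2 * b ^ 2) ^ 2
          < b * (b ^ 2 + h ^ 2) * (h ^ 2 * c ^ 2 - s ^ 2 * b ^ 2) ^ 2 :=
            mul_lt_mul_of_pos_right hN (by positivity)
        _ < b * (b ^ 2 + h ^ 2) * (h ^ 2 * c ^ 2 - s ^ 2 * a ^ 2) ^ 2 :=
            mul_lt_mul_of_pos_left (pow_lt_pow_left₀ hDb_lt hDb.le two_ne_zero)
              (by positivity)
    have h2 := mul_lt_mul_of_pos_left h1 hK
    calc 4 * c * s * h * (a * (a ^ 2 + h ^ 2)) * (h ^ 2 * c ^ 2 - s ^ 2 * b ^ 2) ^ 2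
        = 4 * c * s * h * (a * (a ^ 2 + h ^ 2) * (h ^ 2 * c ^ 2 - s ^ 2 * b ^ 2) ^ 2) := by
          ring
      _ < 4 * c * s * h * (b * (b ^ 2 + h ^ 2) * (h ^ 2 * c ^ 2 - s ^ 2 * a ^ 2) ^ 2) := h2
      _ = 4 * c * s * h * (b * (b ^ 2 + h ^ 2)) * (h ^ 2 * c ^ 2 - s ^ 2 * a ^ 2) ^ 2 := by
          ring
end
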